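/- Let S ⊆ ℝ be a closed set such that no point of S is both left-isolated and right-isolated in S. Suppose x < y with x, y ∈ S, and suppose x is not right-isolated in S. Then there exist z ∈ (x, y) ∩ S that is not left-isolated in S, and z' ∈ (x, y) ∩ S that is not right-isolated in S. -/
import Mathlib

/-- In an interval fully contained in `S`, an interior point is not right-isolated. -/
lemma mid_not_right_iso (S : Set ℝ) (a b : ℝ) (hsub : Set.Ioo a b ⊆ S)
    (m : ℝ) (hm : m ∈ Set.Ioo a b) :
    ¬∃ ε > 0, ∀ t ∈ Set.Ioo m (m + ε), t ∉ S := by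
  rintro ⟨ε, hε, h⟩
  set u := m + min ε (b - m) / 2 with hu
  have hpos : 0 < min ε (b - m) := lt_min hε (by linarith [hm.2])
  have h1 : m < u := by simp only [hu]; linarith
  have h2 : u < m + ε := by
    have := min_le_left ε (b - m); simp only [hu]; linarith
  have h3 : u < b := by
    have := min_le_right ε (b - m); simp only [hu]; linarith
  exact h u ⟨h1, h2⟩ (hsub ⟨lt_trans hm.1 h1, h3⟩)

/-- In an interval fully contained in `S`, an interior point is not left-isolated. -/
lemma mid_not_left_iso (S : Set ℝ) (a b : ℝ) (hsub : Set.Ioo a b ⊆ S)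
    (m : ℝ) (hm : m ∈ Set.Ioo a b) :
    ¬∃ ε > 0, ∀ t ∈ Set.Ioo (m - ε) m, t ∉ S := by
  rintro ⟨ε, hε, h⟩
  set u := m - min ε (m - a) / 2 with hu
  have hpos : 0 < min ε (m - a) := lt_min hε (by linarith [hm.1])
  have h1 : u < m := by simp only [hu]; linarith
  have h2 : m - ε < u := by
    have := min_le_left ε (m - a); simp only [hu]; linarith
  have h3 : a < u := by
    have := min_le_right ε (m - a); simp only [hu]; linarith
  exact h u ⟨h2, h1⟩ (hsub ⟨h3, lt_trans h1 hm.2⟩)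

/-- If `t ∉ S`, `t < c`, `c ∈ S`, `S` closed and no point two-sided isolated, then
`sInf (S ∩ [t,c])` is a point of `S` in `(t, c]` which is not right-isolated. -/
lemma exists_not_right_iso_of_gap (S : Set ℝ) (hS : IsClosed S)
    (hno : ∀ x ∈ S,
      ¬((∃ ε > 0, ∀ t ∈ Set.Ioo (x - ε) x, t ∉ S) ∧ (∃ ε > 0, ∀ t ∈ Set.Ioo x (x + ε), t ∉ S)))
    (t c : ℝ) (htS : t ∉ S) (htc : t < c) (hc : c ∈ S) :
    ∃ w ∈ S, t < w ∧ w ≤ c ∧ ¬∃ ε > 0, ∀ u ∈ Set.Ioo w (w + ε), u ∉ S := by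
  set B := S ∩ Set.Icc t c with hB
  have hBc : IsClosed B := hS.inter isClosed_Icc
  have hBne : B.Nonempty := ⟨c, hc, le_of_lt htc, le_refl c⟩
  have hBbd : BddBelow B := ⟨t, fun u hu => hu.2.1⟩
  set w := sInf B with hw
  have hwB : w ∈ B := hBc.csInf_mem hBne hBbd
  have hwS : w ∈ S := hwB.1
  have hwt : t < w := lt_of_le_of_ne hwB.2.1 (fun e => htS (e ▸ hwS))
  have hleft : ∃ ε > 0, ∀ u ∈ Set.Ioo (w - ε) w, u ∉ S := by
    refine ⟨w - t, by linarith, fun u hu huS => ?_⟩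
    have hu1 : t < u := by have := hu.1; linarith
    have : w ≤ u := csInf_le hBbd ⟨huS, le_of_lt hu1, le_trans (le_of_lt hu.2) hwB.2.2⟩
    linarith [hu.2]
  have := hno w hwS
  exact ⟨w, hwS, hwt, hwB.2.2, fun hr => this ⟨hleft, hr⟩⟩

/-- Symmetric version: if `c ∈ S`, `c < t`, `t ∉ S`, and `S ∩ (c, t)` is nonempty, then
`sSup (S ∩ [c,t])` is a point of `S` in `(c, t)` which is not left-isolated. -/
lemma exists_not_left_iso_of_gap (S : Set ℝ) (hS : IsClosed S)
    (hno : ∀ x ∈ S,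
      ¬((∃ ε > 0, ∀ t ∈ Set.Ioo (x - ε) x, t ∉ S) ∧ (∃ ε > 0, ∀ t ∈ Set.Ioo x (x + ε), t ∉ S)))
    (c t : ℝ) (htS : t ∉ S) (hct : c < t)
    (hne : ∃ s ∈ S, c < s ∧ s < t) :
    ∃ z ∈ S, c < z ∧ z < t ∧ ¬∃ ε > 0, ∀ u ∈ Set.Ioo (z - ε) z, u ∉ S := by
  obtain ⟨s, hsS, hcs, hst⟩ := hne
  set B := S ∩ Set.Icc c t with hB
  have hBc : IsClosed B := hS.inter isClosed_Icc
  have hBne : B.Nonempty := ⟨s, hsS, le_of_lt hcs, le_of_lt hst⟩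
  have hBbd : BddAbove B := ⟨t, fun u hu => hu.2.2⟩
  set z := sSup B with hz
  have hzB : z ∈ B := hBc.csSup_mem hBne hBbd
  have hzS : z ∈ S := hzB.1
  have hsz : s ≤ z := le_csSup hBbd ⟨hsS, le_of_lt hcs, le_of_lt hst⟩
  have hcz : c < z := lt_of_lt_of_le hcs hsz
  have hzt : z < t := lt_of_le_of_ne hzB.2.2 (fun e => htS (e ▸ hzS))
  have hright : ∃ ε > 0, ∀ u ∈ Set.Ioo z (z + ε), u ∉ S := by
    refine ⟨t - z, by linarith, fun u hu huS => ?_⟩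
    have hu2 : u < t := by have := hu.2; linarith
    have : u ≤ z := le_csSup hBbd ⟨huS, le_trans hzB.2.1 (le_of_lt hu.1), le_of_lt hu2⟩
    linarith [hu.1]
  have := hno z hzS
  exact ⟨z, hzS, hcz, hzt, fun hl => this ⟨hl, hright⟩⟩

/-- If `S ⊆ ℝ` is closed and no point of `S` is isolated from both sides, then between any
two points `x < y` of `S` with `x` not right-isolated, there are points of `S` in `(x,y)`
that are not left-isolated, and points that are not right-isolated. -/
theorem exists_nonisolated_between (S : Set ℝ) (hS : IsClosed S)
    (hno : ∀ x ∈ S,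
      ¬((∃ ε > 0, ∀ t ∈ Set.Ioo (x - ε) x, t ∉ S) ∧ (∃ ε > 0, ∀ t ∈ Set.Ioo x (x + ε), t ∉ S)))
    (x y : ℝ) (hx : x ∈ S) (hy : y ∈ S) (hxy : x < y)
    (hxr : ¬∃ ε > 0, ∀ t ∈ Set.Ioo x (x + ε), t ∉ S) :
    (∃ z ∈ Set.Ioo x y, z ∈ S ∧ ¬∃ ε > 0, ∀ t ∈ Set.Ioo (z - ε) z, t ∉ S) ∧
    (∃ z ∈ Set.Ioo x y, z ∈ S ∧ ¬∃ ε > 0, ∀ t ∈ Set.Ioo z (z + ε), t ∉ S) := by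
  push_neg at hxr
  by_cases hgap : ∃ t ∈ Set.Ioo x y, t ∉ S
  · obtain ⟨t, ⟨hxt, hty⟩, htS⟩ := hgap
    -- get a point of S in (x, t)
    obtain ⟨s, hs, hsS⟩ := hxr (t - x) (by linarith)
    have hsIoo : x < s ∧ s < t := ⟨hs.1, by have := hs.2; linarith⟩
    obtain ⟨z, hzS, hxz, hzt, hzleft⟩ :=
      exists_not_left_iso_of_gap S hS hno x t htS hxt ⟨s, hsS, hsIoo.1, hsIoo.2⟩
    have hzy : z < y := lt_trans hzt hty
    refine ⟨⟨z, ⟨hxz, hzy⟩, hzS, hzleft⟩, ?_⟩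
    -- second part: find a non-right-isolated point in (x, y)
    by_cases hgap2 : ∃ t' ∈ Set.Ioo x z, t' ∉ S
    · obtain ⟨t', ⟨hxt', ht'z⟩, ht'S⟩ := hgap2
      obtain ⟨w, hwS, ht'w, hwz, hwr⟩ :=
        exists_not_right_iso_of_gap S hS hno t' z ht'S ht'z hzS
      exact ⟨w, ⟨lt_trans hxt' ht'w, lt_of_le_of_lt hwz hzy⟩, hwS, hwr⟩
    · push_neg at hgap2
      set m := (x + z) / 2 with hm
      have hmIoo : m ∈ Set.Ioo x z := ⟨by simp only [hm]; linarith, by simp only [hm]; linarith⟩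
      exact ⟨m, ⟨hmIoo.1, lt_trans hmIoo.2 hzy⟩, hgap2 m hmIoo,
        mid_not_right_iso S x z hgap2 m hmIoo⟩
  · push_neg at hgap
    set m := (x + y) / 2 with hm
    have hmIoo : m ∈ Set.Ioo x y := ⟨by simp only [hm]; linarith, by simp only [hm]; linarith⟩
    exact ⟨⟨m, hmIoo, hgap m hmIoo, mid_not_left_iso S x y hgap m hmIoo⟩,
      ⟨m, hmIoo, hgap m hmIoo, mid_not_right_iso S x y hgap m hmIoo⟩⟩
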